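/- Let J satisfy condition (J), l > 0, c > 0, d > 0. Let U_l^c = {φ ∈ C([-l,l]) : φ ≥ 0, φ(l) = 0} and V_l^c = {φ ∈ C¹([-l,l]) : φ ≥ 0, φ(l) = 0, φ'(l) = -(d/c) ∫_{-l}^l J(l-y) φ(y) dy}. Then V_l^c is dense in U_l^c with respect to the sup norm: for every U₀ ∈ U_l^c and ε > 0 there exists V₀ ∈ V_l^c with sup_{x ∈ [-l,l]} |U₀(x) - V₀(x)| ≤ ε. -/

import Mathlib

open MeasureTheory Real Filter Set

lemma polyContDiff (p : Polynomial ℝ) : ContDiff ℝ 1 fun x : ℝ => p.eval x := by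
  induction p using Polynomial.induction_on' with
  | add p q hp hq => simpa [Polynomial.eval_add] using hp.add hq
  | monomial n a =>
      simpa [Polynomial.eval_monomial] using contDiff_const.mul (contDiff_id.pow n)

lemma texp_bound (S t : ℝ) (hS : 1 ≤ S) (ht : 0 ≤ t) :
    t * Real.exp (-(S ^ 2) * t ^ 2) ≤ 1 / S := by
  have hS0 : 0 < S := by linarith
  have h1 : 1 + S ^ 2 * t ^ 2 ≤ Real.exp (S ^ 2 * t ^ 2) := by
    have := Real.add_one_le_exp (S ^ 2 * t ^ 2); linarith
  have hepos : 0 < Real.exp (S ^ 2 * t ^ 2) := Real.exp_pos _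
  have h2 : Real.exp (-(S ^ 2) * t ^ 2) ≤ 1 / (1 + S ^ 2 * t ^ 2) := by
    rw [show -(S ^ 2) * t ^ 2 = -(S ^ 2 * t ^ 2) by ring, Real.exp_neg]
    have hpos : (0:ℝ) < 1 + S ^ 2 * t ^ 2 := by positivity
    rw [inv_eq_one_div]
    exact one_div_le_one_div_of_le hpos h1
  have h3 : t * Real.exp (-(S ^ 2) * t ^ 2) ≤ t / (1 + S ^ 2 * t ^ 2) := by
    rw [div_eq_mul_one_div]
    exact mul_le_mul_of_nonneg_left h2 ht
  refine h3.trans ?_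
  rw [div_le_div_iff₀ (by positivity) hS0]
  nlinarith [sq_nonneg (S * t - 1)]

/-- density of `V_l^c` in `U_l^c` (case `c > 0`): every nonnegative
continuous `U₀` on `[-l,l]` with `U₀(l) = 0` can be approximated within `ε` in sup norm
by a nonnegative `C¹` function `V₀` with `V₀(l) = 0` and
`V₀'(l) = -(d/c) ∫_{-l}^l J(l-y) V₀(y) dy`. -/
theorem stmt16 (J : ℝ → ℝ) (hJcont : Continuous J) (hJbdd : ∃ C, ∀ x, J x ≤ C)
    (hJnonneg : ∀ x, 0 ≤ J x) (hJ0 : 0 < J 0) (hJL1 : Integrable J)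
    (hJint : ∫ x, J x = 1)
    (l c d : ℝ) (hl : 0 < l) (hc : 0 < c) (hd : 0 < d)
    (U₀ : ℝ → ℝ) (hU₀cont : ContinuousOn U₀ (Set.Icc (-l) l))
    (hU₀nonneg : ∀ x ∈ Set.Icc (-l) l, 0 ≤ U₀ x) (hU₀l : U₀ l = 0)
    (ε : ℝ) (hε : 0 < ε) :
    ∃ V₀ : ℝ → ℝ, ContDiff ℝ 1 V₀ ∧
      (∀ x ∈ Set.Icc (-l) l, 0 ≤ V₀ x) ∧ V₀ l = 0 ∧
      deriv V₀ l = -(d / c) * ∫ y in Set.Icc (-l) l, J (l - y) * V₀ y ∧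
      ∀ x ∈ Set.Icc (-l) l, |U₀ x - V₀ x| ≤ ε := by
  obtain ⟨C₀, hC₀⟩ := hJbdd
  set C : ℝ := max C₀ 1 with hCdef
  have hC1 : (1:ℝ) ≤ C := le_max_right _ _
  have hJC : ∀ x, J x ≤ C := fun x => (hC₀ x).trans (le_max_left _ _)
  have hCpos : (0:ℝ) < C := lt_of_lt_of_le one_pos hC1
  obtain ⟨P, hP⟩ := exists_polynomial_near_of_continuousOn (-l) l U₀ hU₀cont (ε/8)
    (by positivity)
  have hτ : (0:ℝ) < ε/8 := by positivity
  set W : ℝ → ℝ := fun x => Real.sqrt ((P.eval x - P.eval l)^2 + (ε/8)^2) - ε/8 with hWdef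
  have hfpos : ∀ x : ℝ, 0 < (P.eval x - P.eval l)^2 + (ε/8)^2 := fun x => by positivity
  have hWcd : ContDiff ℝ 1 W := by
    apply ContDiff.sub _ contDiff_const
    exact ContDiff.sqrt ((((polyContDiff P).sub contDiff_const).pow 2).add contDiff_const)
      (fun x => (hfpos x).ne')
  have hWnonneg : ∀ x : ℝ, 0 ≤ W x := by
    intro x
    have h1 : Real.sqrt ((ε/8)^2) ≤ Real.sqrt ((P.eval x - P.eval l)^2 + (ε/8)^2) :=
      Real.sqrt_le_sqrt (le_add_of_nonneg_left (sq_nonneg _))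
    rw [Real.sqrt_sq hτ.le] at h1
    simp only [hWdef]
    linarith
  have hWl : W l = 0 := by
    simp [hWdef, Real.sqrt_sq hτ.le]
  have hWderiv : HasDerivAt W 0 l := by
    have hq : HasDerivAt (fun x : ℝ => P.eval x - P.eval l) (P.derivative.eval l) l :=
      (P.hasDerivAt l).sub_const _
    have h2 := (hq.pow 2).add_const ((ε/8)^2)
    have h3 := (h2.sqrt (hfpos l).ne')
    have h4 := h3.sub_const (ε/8)
    refine h4.congr_deriv ?_
    simp
  have hWclose : ∀ x ∈ Set.Icc (-l) l, |U₀ x - W x| ≤ ε/2 := by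
    intro x hx
    have hQx : |P.eval x - U₀ x| < ε/8 := hP x hx
    have hQl : |P.eval l| < ε/8 := by
      have := hP l ⟨by linarith, le_refl l⟩
      rwa [hU₀l, sub_zero] at this
    set q := P.eval x - P.eval l with hqdef
    have hs1 : |q| ≤ Real.sqrt (q^2 + (ε/8)^2) := by
      rw [show |q| = Real.sqrt (q^2) from (Real.sqrt_sq_eq_abs q).symm]
      exact Real.sqrt_le_sqrt (le_add_of_nonneg_right (sq_nonneg _))
    have hs2 : Real.sqrt (q^2 + (ε/8)^2) ≤ |q| + ε/8 := by
      rw [show |q| + ε/8 = Real.sqrt ((|q| + ε/8)^2) from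
        (Real.sqrt_sq (by positivity)).symm]
      have h9 : 0 ≤ |q| * (ε/8) := mul_nonneg (abs_nonneg q) hτ.le
      have h10 : (|q| + ε/8)^2 = q^2 + (ε/8)^2 + 2*(|q| * (ε/8)) := by
        rw [show (|q| + ε/8)^2 = |q|^2 + 2*(|q| * (ε/8)) + (ε/8)^2 by ring, sq_abs]
        ring
      exact Real.sqrt_le_sqrt (by rw [h10]; linarith)
    have hq1 : |q - U₀ x| ≤ |P.eval x - U₀ x| + |P.eval l| := by
      have : q - U₀ x = (P.eval x - U₀ x) - P.eval l := by rw [hqdef]; ring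
      rw [this]
      exact abs_sub (P.eval x - U₀ x) (P.eval l)
    have habs := abs_abs_sub_abs_le_abs_sub q (U₀ x)
    have hU : |U₀ x| = U₀ x := abs_of_nonneg (hU₀nonneg x hx)
    rw [hU] at habs
    have hb1 : |q| - U₀ x ≤ ε/4 := by
      have := (abs_le.mp (habs.trans (by linarith : |q - U₀ x| ≤ ε/4))).2; linarith
    have hb2 : U₀ x - |q| ≤ ε/4 := by
      have := (abs_le.mp (habs.trans (by linarith : |q - U₀ x| ≤ ε/4))).1; linarith
    have hWx : W x = Real.sqrt (q^2 + (ε/8)^2) - ε/8 := by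
      simp only [hWdef, hqdef]
    have hWx1 : W x ≤ |q| := by rw [hWx]; linarith
    have hWx2 : |q| - ε/8 ≤ W x := by rw [hWx]; linarith
    clear_value q W
    rw [abs_le]
    constructor <;> linarith
  -- integral of the W part
  have hWcont : Continuous W := hWcd.continuous
  have hJWcont : Continuous fun y => J (l - y) * W y :=
    (hJcont.comp (continuous_const.sub continuous_id)).mul hWcont
  have hIVint : IntegrableOn (fun y => J (l - y) * W y) (Set.Icc (-l) l) volume :=
    hJWcont.integrableOn_Icc
  set IV := ∫ y in Set.Icc (-l) l, J (l - y) * W y with hIVdef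
  have hIV0 : 0 ≤ IV :=
    setIntegral_nonneg measurableSet_Icc
      (fun y _ => mul_nonneg (hJnonneg _) (hWnonneg _))
  clear_value W IV
  -- choose the slope parameter S
  set S : ℝ := 2*((d/c)*C*(2*l)) + 4*((d/c)*IV)/ε + 1 with hSdef
  have hA0 : (0:ℝ) < (d/c)*C*(2*l) := by positivity
  have hB0 : (0:ℝ) ≤ 4*((d/c)*IV)/ε := by positivity
  have hS1 : (1:ℝ) ≤ S := by rw [hSdef]; linarith
  have hS0 : (0:ℝ) < S := by linarith
  clear_value S
  set φ : ℝ → ℝ := fun x => (l - x) * Real.exp (-(S^2) * (l - x)^2) with hφdef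
  have hφcd : ContDiff ℝ 1 φ :=
    (contDiff_const.sub contDiff_id).mul
      ((contDiff_const.mul ((contDiff_const.sub contDiff_id).pow 2)).exp)
  have hφnonneg : ∀ x ∈ Set.Icc (-l) l, 0 ≤ φ x := fun x hx =>
    mul_nonneg (by linarith [hx.2]) (Real.exp_pos _).le
  have hφl : φ l = 0 := by simp [hφdef]
  have hφbound : ∀ x ∈ Set.Icc (-l) l, φ x ≤ 1/S := fun x hx =>
    texp_bound S (l - x) hS1 (by linarith [hx.2])
  have hφderiv : HasDerivAt φ (-1) l := by
    simp only [hφdef]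
    have h1 : HasDerivAt (fun x : ℝ => l - x) (-1) l := by
      simpa using (hasDerivAt_id l).const_sub l
    have h2 := (h1.pow 2).const_mul (-(S^2))
    have h3 := h2.exp
    have h4 := h1.mul h3
    refine h4.congr_deriv ?_
    simp
  have hφcont : Continuous φ := hφcd.continuous
  have hJφcont : Continuous fun y => J (l - y) * φ y :=
    (hJcont.comp (continuous_const.sub continuous_id)).mul hφcont
  have hIφint : IntegrableOn (fun y => J (l - y) * φ y) (Set.Icc (-l) l) volume :=
    hJφcont.integrableOn_Icc
  set Iφ := ∫ y in Set.Icc (-l) l, J (l - y) * φ y with hIφdef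
  have hIφ0 : 0 ≤ Iφ :=
    setIntegral_nonneg measurableSet_Icc (fun y hy => mul_nonneg (hJnonneg _) (hφnonneg y hy))
  have hvol : (volume (Set.Icc (-l) l)).toReal = 2*l := by
    rw [Real.volume_Icc, ENNReal.toReal_ofReal (by linarith)]
    ring
  have hIφle : Iφ ≤ C * (1/S) * (2*l) := by
    have hb := norm_setIntegral_le_of_norm_le_const (μ := volume) (s := Set.Icc (-l) l)
      (f := fun y => J (l - y) * φ y)
      (C := C * (1/S)) (by rw [Real.volume_Icc]; exact ENNReal.ofReal_lt_top)
      (fun y hy => by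
        rw [Real.norm_eq_abs, abs_of_nonneg (mul_nonneg (hJnonneg _) (hφnonneg y hy))]
        exact mul_le_mul (hJC _) (hφbound y hy) (hφnonneg y hy) hCpos.le)
    rw [Real.norm_eq_abs, measureReal_def, hvol] at hb
    calc Iφ ≤ |Iφ| := le_abs_self _
    _ ≤ C * (1/S) * (2*l) := hb
  clear_value φ Iφ
  have hIφhalf : (d/c) * Iφ ≤ 1/2 := by
    have h5 : (d/c) * Iφ ≤ (d/c) * (C*(1/S)*(2*l)) :=
      mul_le_mul_of_nonneg_left hIφle (by positivity)
    have h6 : (d/c) * (C*(1/S)*(2*l)) = ((d/c)*C*(2*l))/S := by ring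
    rw [h6] at h5
    have h7 : ((d/c)*C*(2*l))/S ≤ 1/2 := by
      rw [div_le_iff₀ hS0]
      rw [hSdef] at *
      nlinarith
    linarith
  have hD2 : (1:ℝ)/2 ≤ 1 - (d/c)*Iφ := by linarith
  have hDne : (1 - (d/c)*Iφ) ≠ 0 := by linarith
  set m : ℝ := ((d/c)*IV) / (1 - (d/c)*Iφ) with hmdef
  have hm0 : 0 ≤ m := div_nonneg (mul_nonneg (div_nonneg hd.le hc.le) hIV0) (by linarith)
  have hkey : m * (1 - (d/c)*Iφ) = (d/c)*IV := div_mul_cancel₀ _ hDne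
  clear_value m
  have hm2 : m ≤ 2*((d/c)*IV) := by nlinarith
  have hmS : m * (1/S) ≤ ε/2 := by
    have hBS : 4*((d/c)*IV)/ε ≤ S := by rw [hSdef]; linarith
    have h9 := mul_le_mul_of_nonneg_left hBS (by positivity : (0:ℝ) ≤ ε/2)
    have h8 : (ε/2) * (4*((d/c)*IV)/ε) = 2*((d/c)*IV) := by field_simp; ring
    rw [h8] at h9
    rw [mul_one_div, div_le_iff₀ hS0]
    linarith
  -- the approximant
  refine ⟨fun x => W x + m * φ x, hWcd.add (contDiff_const.mul hφcd), ?_, ?_, ?_, ?_⟩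
  · intro x hx
    exact add_nonneg (hWnonneg x) (mul_nonneg hm0 (hφnonneg x hx))
  · show W l + m * φ l = 0
    rw [hWl, hφl]; ring
  · have hV : HasDerivAt (fun x => W x + m * φ x) (0 + m * (-1)) l :=
      hWderiv.add (hφderiv.const_mul m)
    rw [hV.deriv]
    have hsplit : ∫ y in Set.Icc (-l) l, J (l - y) * (W y + m * φ y) = IV + m * Iφ := by
      rw [show (fun y => J (l - y) * (W y + m * φ y))
          = fun y => J (l - y) * W y + m * (J (l - y) * φ y) from funext fun y => by ring]
      rw [integral_add hIVint (hIφint.const_mul m), integral_const_mul, ← hIVdef, ← hIφdef]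
    rw [hsplit]
    linear_combination -hkey
  · intro x hx
    have h1 : |U₀ x - (W x + m * φ x)| ≤ |U₀ x - W x| + |m * φ x| := by
      have : U₀ x - (W x + m * φ x) = (U₀ x - W x) + (-(m * φ x)) := by ring
      rw [this]
      exact (abs_add_le _ _).trans (by rw [abs_neg])
    have h2 : |m * φ x| ≤ ε/2 := by
      rw [abs_of_nonneg (mul_nonneg hm0 (hφnonneg x hx))]
      calc m * φ x ≤ m * (1/S) :=
            mul_le_mul_of_nonneg_left (hφbound x hx) hm0
      _ ≤ ε/2 := hmS
    have := hWclose x hx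
    linarith
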